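/- arXiv:2106.12355 — 5 statements merged into one kernel-verified Lean document; each statement's English description precedes it below -/
import Mathlib

section
/- Let R be a commutative ring of characteristic 2 and let Ω be the 4k×4k block matrix Ω = (A, B, C, D; Bᵀ, Aᵀ, Dᵀ, Cᵀ; C, D, A, B; Dᵀ, Cᵀ, Bᵀ, Aᵀ) where A, B, C, D are k×k circulant matrices over R. Then Ω·Ωᵀ = I_{4k} if and only if AAᵀ + BBᵀ + CCᵀ + DDᵀ = I_k and ACᵀ + BDᵀ + CAᵀ + DBᵀ = 0. -/
open Matrix

/-- The cyclic right-shift permutation matrix `P = (0, I_{n-1}; 1, 0)`. -/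
def shiftP (n : ℕ) [NeZero n] (R : Type*) [CommRing R] : Matrix (Fin n) (Fin n) R :=
  Matrix.of fun i j => if j = i + 1 then (1 : R) else 0

/-- The circulant matrix `cir (b₀, …, b_{n-1})`, whose `(i, j)` entry is `b_{(j-i) mod n}`. -/
def cir {R : Type*} [CommRing R] {n : ℕ} (b : Fin n → R) : Matrix (Fin n) (Fin n) R :=
  Matrix.of fun i j => b (j - i)

lemma cir_eq_circulant {R : Type*} [CommRing R] : ∀ {n : ℕ} (b : Fin n → R),
    cir b = Matrix.circulant (fun i => b (-i))
  | 0, b => by ext i j; exact i.elim0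
  | n + 1, b => by
    ext i j
    simp only [cir, Matrix.circulant_apply, Matrix.of_apply]
    rw [neg_sub]

lemma transpose_cir {R : Type*} [CommRing R] : ∀ {n : ℕ} (b : Fin n → R),
    (cir b)ᵀ = cir (fun i => b (-i))
  | 0, b => by ext i j; exact i.elim0
  | n + 1, b => by
    ext i j
    simp only [cir, Matrix.transpose_apply, Matrix.of_apply]
    rw [neg_sub]

lemma cir_mul_comm {R : Type*} [CommRing R] {n : ℕ} (u v : Fin n → R) :
    cir u * cir v = cir v * cir u := by
  rw [cir_eq_circulant u, cir_eq_circulant v]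
  exact Matrix.Fin.circulant_mul_comm _ _

lemma abstract_key {S : Type*} [Ring S] (h2 : ∀ x : S, x + x = 0)
    (A B C D A' B' C' D' : S)
    (cAB : A*B = B*A) (cCD : C*D = D*C) (cA'B' : A'*B' = B'*A') (cC'D' : C'*D' = D'*C')
    (cAA' : A*A' = A'*A) (cBB' : B*B' = B'*B) (cCC' : C*C' = C'*C) (cDD' : D*D' = D'*D)
    (cBC : B*C = C*B) (cAD : A*D = D*A) (cA'D' : A'*D' = D'*A') (cB'C' : B'*C' = C'*B')
    (cDB' : D*B' = B'*D) (cCA' : C*A' = A'*C) (cBD' : B*D' = D'*B) (cAC' : A*C' = C'*A) :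
    ((A * A' + B * B' + (C * C' + D * D') = 1 ∧
        A * B + B * A + (C * D + D * C) = 0 ∧
          B' * A' + A' * B' + (D' * C' + C' * D') = 0 ∧
            B' * B + A' * A + (D' * D + C' * C) = 1) ∧
      (A * C' + B * D' + (C * A' + D * B') = 0 ∧
        A * D + B * C + (C * B + D * A) = 0 ∧
          B' * C' + A' * D' + (D' * A' + C' * B') = 0 ∧
            B' * D + A' * C + (D' * B + C' * A) = 0) ∧
        (C * A' + D * B' + (A * C' + B * D') = 0 ∧
          C * B + D * A + (A * D + B * C) = 0 ∧
            D' * A' + C' * B' + (B' * C' + A' * D') = 0 ∧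
              D' * B + C' * A + (B' * D + A' * C) = 0) ∧
          C * C' + D * D' + (A * A' + B * B') = 1 ∧
            C * D + D * C + (A * B + B * A) = 0 ∧
              D' * C' + C' * D' + (B' * A' + A' * B') = 0 ∧
                D' * D + C' * C + (B' * B + A' * A) = 1) ↔
    (A * A' + B * B' + C * C' + D * D' = 1 ∧ A * C' + B * D' + C * A' + D * B' = 0) := by
  have hxx : ∀ X Y : S, X + X + (Y + Y) = 0 := fun X Y => by rw [h2, h2, add_zero]
  have hxyyx : ∀ X Y : S, X + Y + (Y + X) = 0 := fun X Y => by
    rw [show X + Y + (Y + X) = X + X + (Y + Y) from by abel, h2, h2, add_zero]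
  constructor
  · rintro ⟨⟨h1, -, -, -⟩, ⟨h5, -, -, -⟩, -, -⟩
    exact ⟨by rw [← h1]; abel, by rw [← h5]; abel⟩
  · rintro ⟨h1, h5⟩
    refine ⟨⟨?_, ?_, ?_, ?_⟩, ⟨?_, ?_, ?_, ?_⟩, ⟨?_, ?_, ?_, ?_⟩, ?_, ?_, ?_, ?_⟩
    · rw [← h1]; abel
    · rw [← cAB, ← cCD]; exact hxx _ _
    · rw [cA'B', cC'D']; exact hxx _ _
    · rw [← cBB', ← cAA', ← cDD', ← cCC', ← h1]; abel
    · rw [← h5]; abel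
    · rw [← cBC, ← cAD]; exact hxyyx _ _
    · rw [← cA'D', ← cB'C']; exact hxyyx _ _
    · rw [← cDB', ← cCA', ← cBD', ← cAC', ← h5]; abel
    · rw [← h5]; abel
    · rw [← cBC, ← cAD]; exact hxyyx _ _
    · rw [← cA'D', ← cB'C']; exact hxyyx _ _
    · rw [← cBD', ← cAC', ← cDB', ← cCA', ← h5]; abel
    · rw [← h1]; abel
    · rw [cCD, cAB]; exact hxx _ _
    · rw [cC'D', cA'B']; exact hxx _ _
    · rw [← cDD', ← cCC', ← cBB', ← cAA', ← h1]; abel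

/-- For `k×k` circulant matrices `A, B, C, D` over a commutative ring of characteristic 2,
the block matrix `Ω = (A B C D; Bᵀ Aᵀ Dᵀ Cᵀ; C D A B; Dᵀ Cᵀ Bᵀ Aᵀ)` satisfies `Ω Ωᵀ = I`
iff `AAᵀ + BBᵀ + CCᵀ + DDᵀ = I` and `ACᵀ + BDᵀ + CAᵀ + DBᵀ = 0`. -/
theorem omega_four_block_selfdual_iff {R : Type*} [CommRing R] [CharP R 2] {k : ℕ}
    (A B C D : Matrix (Fin k) (Fin k) R)
    (hA : ∃ a, A = cir a) (hB : ∃ b, B = cir b) (hC : ∃ c, C = cir c) (hD : ∃ d, D = cir d) :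
    (Matrix.fromBlocks
        (Matrix.fromBlocks A B Bᵀ Aᵀ) (Matrix.fromBlocks C D Dᵀ Cᵀ)
        (Matrix.fromBlocks C D Dᵀ Cᵀ) (Matrix.fromBlocks A B Bᵀ Aᵀ)) *
      (Matrix.fromBlocks
        (Matrix.fromBlocks A B Bᵀ Aᵀ) (Matrix.fromBlocks C D Dᵀ Cᵀ)
        (Matrix.fromBlocks C D Dᵀ Cᵀ) (Matrix.fromBlocks A B Bᵀ Aᵀ))ᵀ = 1 ↔
    (A * Aᵀ + B * Bᵀ + C * Cᵀ + D * Dᵀ = 1 ∧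
     A * Cᵀ + B * Dᵀ + C * Aᵀ + D * Bᵀ = 0) := by
  obtain ⟨a, rfl⟩ := hA
  obtain ⟨b, rfl⟩ := hB
  obtain ⟨c, rfl⟩ := hC
  obtain ⟨d, rfl⟩ := hD
  have hchar : ∀ X : Matrix (Fin k) (Fin k) R, X + X = 0 := fun X => by
    ext i j
    simpa using CharTwo.add_self_eq_zero (X i j)
  have cc : ∀ u v : Fin k → R, cir u * cir v = cir v * cir u := cir_mul_comm
  have ct : ∀ u v : Fin k → R, cir u * (cir v)ᵀ = (cir v)ᵀ * cir u := fun u v => by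
    rw [transpose_cir]; exact cir_mul_comm _ _
  have tt : ∀ u v : Fin k → R, (cir u)ᵀ * (cir v)ᵀ = (cir v)ᵀ * (cir u)ᵀ := fun u v => by
    rw [transpose_cir u, transpose_cir v]; exact cir_mul_comm _ _
  simp only [Matrix.fromBlocks_transpose, Matrix.fromBlocks_multiply, Matrix.transpose_transpose,
    ← Matrix.fromBlocks_one, ← Matrix.fromBlocks_zero, Matrix.fromBlocks_add,
    Matrix.fromBlocks_inj]
  exact abstract_key hchar (cir a) (cir b) (cir c) (cir d) (cir a)ᵀ (cir b)ᵀ (cir c)ᵀ (cir d)ᵀ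
    (cc a b) (cc c d) (tt a b) (tt c d)
    (ct a a) (ct b b) (ct c c) (ct d d)
    (cc b c) (cc a d) (tt a d) (tt b c)
    ((ct d b).symm ▸ rfl) (ct c a) (ct b d) (ct a c)
end

section
/- Let R be a commutative Frobenius ring and let Ω be an n×n matrix over R satisfying Ω·Ωᵀ = −I_n. Then the row space of the n×2n matrix G = (I_n | Ω) is a self-dual code of length 2n over R, i.e. the R-submodule of R^{2n} generated by the rows of G equals its own dual under the Euclidean inner product. -/
open Matrix

/-- The (Euclidean) dual of a code `C ⊆ R^ι`:
`C^⊥ = {x | ⟨x, y⟩ = 0 for all y ∈ C}` where `⟨x, y⟩ = ∑ i, x i * y i`. -/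
def euclideanDual {R : Type*} [CommRing R] {ι : Type*} [Fintype ι]
    (C : Submodule R (ι → R)) : Submodule R (ι → R) where
  carrier := {x | ∀ y ∈ C, ∑ i, x i * y i = 0}
  add_mem' := by
    intro a b ha hb y hy
    simp [add_mul, Finset.sum_add_distrib, ha y hy, hb y hy]
  zero_mem' := by intro y hy; simp
  smul_mem' := by
    intro c x hx y hy
    simp [smul_eq_mul, mul_assoc, ← Finset.mul_sum, hx y hy]

/-- If `R` is a finite commutative Frobenius ring (finite, commutative and self-injective)
and `Ω` is an `n×n` matrix with `Ω Ωᵀ = -I`, then the code generated by the rows of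
`G = (I_n | Ω)` is self-dual: it equals its own Euclidean dual. -/
theorem span_rows_fromColumns_one_self_dual {R : Type*} [CommRing R] [Fintype R]
    (hFrob : Module.Injective R R) {n : ℕ} (Ω : Matrix (Fin n) (Fin n) R)
    (hΩ : Ω * Ωᵀ = -1) :
    Submodule.span R (Set.range fun i => Matrix.fromCols (1 : Matrix (Fin n) (Fin n) R) Ω i) =
      euclideanDual
        (Submodule.span R
          (Set.range fun i => Matrix.fromCols (1 : Matrix (Fin n) (Fin n) R) Ω i)) := by
  set r : Fin n → (Fin n ⊕ Fin n → R) :=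
    fun i => Matrix.fromCols (1 : Matrix (Fin n) (Fin n) R) Ω i with hr
  -- Ωᵀ * Ω = -1 as well
  have hΩ' : Ωᵀ * Ω = -1 := by
    have h1 : Ω * (-Ωᵀ) = 1 := by rw [Matrix.mul_neg, hΩ, neg_neg]
    have h2 : (-Ωᵀ) * Ω = 1 := mul_eq_one_comm.mp h1
    rw [Matrix.neg_mul] at h2
    rw [← neg_neg (Ωᵀ * Ω), h2]
  -- rows are pairwise orthogonal
  have hrr : ∀ i k, ∑ j, r i j * r k j = 0 := by
    intro i k
    have : ∑ j, r i j * r k j = (1 : Matrix (Fin n) (Fin n) R) i k + (Ω * Ωᵀ) i k := by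
      rw [Fintype.sum_sum_type]
      simp [hr, Matrix.mul_apply, Matrix.transpose_apply, Matrix.one_apply, mul_ite,
        Finset.sum_ite_eq]
    rw [this, hΩ]
    simp [Matrix.one_apply]
  apply le_antisymm
  · rw [Submodule.span_le]
    rintro _ ⟨i, rfl⟩
    intro y hy
    induction hy using Submodule.span_induction with
    | mem z hz => obtain ⟨k, rfl⟩ := hz; exact hrr i k
    | zero => simp
    | add a b _ _ ha hb => simp [mul_add, Finset.sum_add_distrib, ha, hb]
    | smul c a _ ha =>
      simp only [Pi.smul_apply, smul_eq_mul]
      have e : ∑ j, r i j * (c * a j) = c * ∑ j, r i j * a j := by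
        rw [Finset.mul_sum]
        exact Finset.sum_congr rfl fun j _ => by ring
      rw [e, ha, mul_zero]
  · intro x hx
    have hx1 : ∀ k, x (Sum.inl k) = -∑ j, x (Sum.inr j) * Ω k j := by
      intro k
      have h := hx (r k) (Submodule.subset_span ⟨k, rfl⟩)
      rw [Fintype.sum_sum_type] at h
      have h1 : ∑ j, x (Sum.inl j) * r k (Sum.inl j) = x (Sum.inl k) := by
        simp [hr, Matrix.one_apply, mul_ite, Finset.sum_ite_eq]
      have h2 : ∑ j, x (Sum.inr j) * r k (Sum.inr j) = ∑ j, x (Sum.inr j) * Ω k j := by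
        simp [hr]
      rw [h1, h2] at h
      exact eq_neg_of_add_eq_zero_left h
    have hxeq : x = ∑ i, x (Sum.inl i) • r i := by
      funext j
      rw [Finset.sum_apply]
      cases j with
      | inl j =>
        simp [hr, Matrix.one_apply, mul_ite, Finset.sum_ite_eq]
      | inr j =>
        simp only [Pi.smul_apply, smul_eq_mul]
        have : ∀ i, x (Sum.inl i) * r i (Sum.inr j)
            = -∑ k, x (Sum.inr k) * (Ω i k * Ω i j) := by
          intro i
          rw [hx1 i]
          simp only [hr]
          rw [Matrix.fromCols_apply_inr, neg_mul, Finset.sum_mul]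
          congr 1
          exact Finset.sum_congr rfl fun k _ => by ring
        rw [Finset.sum_congr rfl fun i _ => this i]
        have e1 : ∀ k, ∑ i, x (Sum.inr k) * (Ω i k * Ω i j)
            = x (Sum.inr k) * (Ωᵀ * Ω) k j := by
          intro k
          rw [Matrix.mul_apply, Finset.mul_sum]
          exact Finset.sum_congr rfl fun i _ => by rw [Matrix.transpose_apply]
        symm
        calc ∑ i : Fin n, -∑ k : Fin n, x (Sum.inr k) * (Ω i k * Ω i j)
            = -∑ i : Fin n, ∑ k : Fin n, x (Sum.inr k) * (Ω i k * Ω i j) := by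
              simp
          _ = -∑ k : Fin n, ∑ i : Fin n, x (Sum.inr k) * (Ω i k * Ω i j) := by
              rw [Finset.sum_comm]
          _ = -∑ k : Fin n, x (Sum.inr k) * (Ωᵀ * Ω) k j := by
              congr 1
              exact Finset.sum_congr rfl fun k _ => e1 k
          _ = x (Sum.inr j) := by
              rw [hΩ']
              simp [Matrix.one_apply, mul_ite, Finset.sum_ite_eq]
    rw [hxeq]
    exact Submodule.sum_mem _ fun i _ =>
      Submodule.smul_mem _ _ (Submodule.subset_span ⟨i, rfl⟩)
end

section
/- The Gray map φ : (F₂ + uF₂)ⁿ → F₂^{2n} defined coordinatewise by a + bu ↦ (b, a + b) preserves orthogonality: if x, y ∈ (F₂+uF₂)ⁿ satisfy ⟨x, y⟩ = 0 (Euclidean inner product over F₂+uF₂), and moreover ⟨x, x⟩ = ⟨y, y⟩ = 0, then ⟨φ(x), φ(y)⟩ = 0 in F₂^{2n}. In particular, if C is a self-orthogonal linear code over F₂+uF₂, then φ(C) is a self-orthogonal binary code. -/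
/-- The Gray map `φ : (F₂ + uF₂)ⁿ → F₂^{2n}`, acting coordinatewise by
`a + bu ↦ (b, a + b)`.  Here `F₂ + uF₂ = F₂[u]/(u²)` is modelled as
`DualNumber (ZMod 2)`, whose elements are pairs `a + b·ε` with `ε² = 0`. -/
def grayMap {n : ℕ} (x : Fin n → DualNumber (ZMod 2)) : (Fin n ⊕ Fin n) → ZMod 2 :=
  Sum.elim (fun i => (x i).snd) (fun i => (x i).fst + (x i).snd)

lemma gray_key (n : ℕ) (x y : Fin n → DualNumber (ZMod 2))
    (hxy : ∑ i, x i * y i = 0) :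
    ∑ j, grayMap x j * grayMap y j = 0 := by
  have h1 : ∑ i, (x i).fst * (y i).fst = 0 := by
    have := congrArg TrivSqZeroExt.fst hxy
    simpa [TrivSqZeroExt.fst_sum] using this
  have h2 : ∑ i, ((x i).fst * (y i).snd + (x i).snd * (y i).fst) = 0 := by
    have := congrArg TrivSqZeroExt.snd hxy
    simpa [TrivSqZeroExt.snd_sum, TrivSqZeroExt.snd_mul, smul_eq_mul, mul_comm] using this
  simp only [grayMap, Fintype.sum_sum_type, Sum.elim_inl, Sum.elim_inr]
  have key : ∀ i : Fin n, (x i).snd * (y i).snd +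
      ((x i).fst + (x i).snd) * ((y i).fst + (y i).snd)
      = (x i).fst * (y i).fst + ((x i).fst * (y i).snd + (x i).snd * (y i).fst) := by
    intro i
    generalize (x i).fst = a; generalize (x i).snd = b
    generalize (y i).fst = c; generalize (y i).snd = d
    revert a b c d; decide
  calc ∑ i, (x i).snd * (y i).snd + ∑ i, ((x i).fst + (x i).snd) * ((y i).fst + (y i).snd)
      = ∑ i, ((x i).snd * (y i).snd +
          ((x i).fst + (x i).snd) * ((y i).fst + (y i).snd)) := by
        rw [Finset.sum_add_distrib]
    _ = ∑ i, ((x i).fst * (y i).fst +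
          ((x i).fst * (y i).snd + (x i).snd * (y i).fst)) := by
        exact Finset.sum_congr rfl fun i _ => key i
    _ = 0 := by rw [Finset.sum_add_distrib, h1, h2, add_zero]

/-- The Gray map `φ : (F₂+uF₂)ⁿ → F₂^{2n}`, `a + bu ↦ (b, a+b)`, preserves orthogonality:
if `⟨x, y⟩ = 0`, `⟨x, x⟩ = 0` and `⟨y, y⟩ = 0` then `⟨φ(x), φ(y)⟩ = 0`.  In particular, if
`C` is a self-orthogonal linear code over `F₂+uF₂`, then `φ(C)` is a self-orthogonal binary
code. -/
theorem grayMap_preserves_orthogonality (n : ℕ) :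
    (∀ x y : Fin n → DualNumber (ZMod 2),
        (∑ i, x i * y i = 0) → (∑ i, x i * x i = 0) → (∑ i, y i * y i = 0) →
        ∑ j, grayMap x j * grayMap y j = 0) ∧
    (∀ C : Submodule (DualNumber (ZMod 2)) (Fin n → DualNumber (ZMod 2)),
        (∀ x ∈ C, ∀ y ∈ C, ∑ i, x i * y i = 0) →
        ∀ x ∈ C, ∀ y ∈ C, ∑ j, grayMap x j * grayMap y j = 0) := by
  constructor
  · exact fun x y hxy _ _ => gray_key n x y hxy
  · exact fun C hC x hx y hy => gray_key n x y (hC x hx y hy)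
end

section
/- The Gray map ψ : F₄ⁿ → F₂^{2n} defined coordinatewise by aω + b(1+ω) ↦ (a, b) is an F₂-linear bijection, and if C is a self-orthogonal linear code over F₄ (with respect to the Euclidean inner product), then ψ(C) is a self-orthogonal binary code. -/
/-- The Gray map `ψ : F₄ⁿ → F₂^{2n}`, `aω + b(1+ω) ↦ (a, b)`, is an `F₂`-linear bijection
(additive homomorphism between elementary abelian 2-groups, i.e. `F₂`-linear), and it sends
any self-orthogonal linear code over `F₄` (w.r.t. the Euclidean inner product) to a
self-orthogonal binary code.  Here `F₄` is a field with 4 elements and `ω` satisfies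
`ω² + ω + 1 = 0`, so that `{ω, 1+ω}` is an `F₂`-basis of `F₄`. -/
theorem graymap_F4_linear_bijective_selforthogonal
    {F : Type*} [Field F] [Fintype F] (hcard : Fintype.card F = 4) [CharP F 2]
    (ω : F) (hω : ω ^ 2 + ω + 1 = 0) (n : ℕ) :
    ∃ ψ : (Fin n → F) →+ ((Fin n ⊕ Fin n) → ZMod 2),
      Function.Bijective ψ ∧
      (∀ (x : Fin n → F) (a b : Fin n → ZMod 2),
          (∀ i, x i = (ZMod.cast (a i) : F) * ω + (ZMod.cast (b i) : F) * (1 + ω)) →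
          ψ x = Sum.elim a b) ∧
      (∀ C : Submodule F (Fin n → F),
          (∀ x ∈ C, ∀ y ∈ C, ∑ i, x i * y i = 0) →
          ∀ x ∈ C, ∀ y ∈ C, ∑ j, ψ x j * ψ y j = 0) := by
  have h2 : (2 : F) = 0 := by
    have := CharP.cast_eq_zero F 2
    simpa using this
  have zmcases : ∀ z : ZMod 2, z = 0 ∨ z = 1 := by decide
  set c : ZMod 2 →+* F := ZMod.castHom dvd_rfl F with hc
  let φ : ZMod 2 × ZMod 2 →+ F :=
    { toFun := fun p => c p.1 * ω + c p.2 * (1 + ω)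
      map_zero' := by simp
      map_add' := fun p q => by
        simp only [Prod.fst_add, Prod.snd_add, map_add]; ring }
  have hφapp : ∀ p : ZMod 2 × ZMod 2, φ p = c p.1 * ω + c p.2 * (1 + ω) := fun p => rfl
  have hone : (1 : F) ≠ 0 := one_ne_zero
  have hker : ∀ p : ZMod 2 × ZMod 2, φ p = 0 → p = 0 := by
    rintro ⟨a, b⟩ hp
    rw [hφapp] at hp
    rcases zmcases a with ha | ha <;> rcases zmcases b with hb | hb <;>
        subst ha <;> subst hb <;> simp only [map_zero, map_one, zero_mul, one_mul,
          add_zero, zero_add] at hp ⊢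
    · rfl
    · exact absurd (show (1 : F) = 0 by linear_combination hω - ω * hp) hone
    · exact absurd (show (1 : F) = 0 by linear_combination hω - (ω + 1) * hp) hone
    · exact absurd (show (1 : F) = 0 by linear_combination hp - ω * h2) hone
  have hinj : Function.Injective φ := (injective_iff_map_eq_zero φ).mpr hker
  have hbij : Function.Bijective φ :=
    (Fintype.bijective_iff_injective_and_card φ).mpr ⟨hinj, by simp [hcard]⟩
  let e : (ZMod 2 × ZMod 2) ≃+ F := AddEquiv.ofBijective φ hbij
  have heapp : ∀ p : ZMod 2 × ZMod 2, e p = c p.1 * ω + c p.2 * (1 + ω) := fun p => rfl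
  have hmul : ∀ p q : ZMod 2 × ZMod 2,
      e p * e q = e (p.2 * q.2 + p.1 * q.2 + p.2 * q.1,
                     p.1 * q.1 + p.1 * q.2 + p.2 * q.1) := by
    intro p q
    rw [heapp, heapp, heapp]
    simp only [map_add, map_mul]
    linear_combination (c p.1 * c q.1 + c p.1 * c q.2 + c p.2 * c q.1 + c p.2 * c q.2) * hω -
      (c p.1 * c q.1 + c p.1 * c q.2 + c p.2 * c q.1) * (1 + ω) * h2
  have key : ∀ u v : F, (e.symm (u * v)).1 + (e.symm (u * v)).2
      = (e.symm u).1 * (e.symm v).1 + (e.symm u).2 * (e.symm v).2 := by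
    intro u v
    obtain ⟨p, rfl⟩ := e.surjective u
    obtain ⟨q, rfl⟩ := e.surjective v
    rw [hmul, e.symm_apply_apply, e.symm_apply_apply, e.symm_apply_apply]
    revert p q
    decide
  refine ⟨{ toFun := fun x => Sum.elim (fun i => (e.symm (x i)).1) (fun i => (e.symm (x i)).2)
            map_zero' := ?_
            map_add' := ?_ }, ?_, ?_, ?_⟩
  · funext j
    cases j <;> simp
  · intro x y
    funext j
    cases j <;> simp
  · constructor
    · intro x y hxy
      funext i
      have h1 := congrFun hxy (Sum.inl i)
      have h2' := congrFun hxy (Sum.inr i)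
      simp only [AddMonoidHom.coe_mk, ZeroHom.coe_mk, Sum.elim_inl, Sum.elim_inr] at h1 h2'
      have : e.symm (x i) = e.symm (y i) := Prod.ext h1 h2'
      exact e.symm.injective this
    · intro y
      refine ⟨fun i => e (y (Sum.inl i), y (Sum.inr i)), ?_⟩
      funext j
      cases j <;> simp
  · intro x a b hx
    funext j
    have hx' : ∀ i, x i = e (a i, b i) := by
      intro i
      rw [hx i, heapp]
      simp [hc]
    cases j with
    | inl i => simp [hx' i]
    | inr i => simp [hx' i]
  · intro C hC x hx y hy
    have h0 : ∑ i, x i * y i = 0 := hC x hx y hy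
    have h0' : ∑ i, e.symm (x i * y i) = 0 := by
      rw [← map_sum, h0, map_zero]
    have h1 : ∑ i, (e.symm (x i * y i)).1 = 0 := by
      have := congrArg Prod.fst h0'
      simpa [Prod.fst_sum] using this
    have h2' : ∑ i, (e.symm (x i * y i)).2 = 0 := by
      have := congrArg Prod.snd h0'
      simpa [Prod.snd_sum] using this
    simp only [AddMonoidHom.coe_mk, ZeroHom.coe_mk]
    rw [Fintype.sum_sum_type]
    simp only [Sum.elim_inl, Sum.elim_inr]
    calc (∑ i, (e.symm (x i)).1 * (e.symm (y i)).1) +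
          ∑ i, (e.symm (x i)).2 * (e.symm (y i)).2
        = ∑ i, ((e.symm (x i)).1 * (e.symm (y i)).1 + (e.symm (x i)).2 * (e.symm (y i)).2) := by
          rw [Finset.sum_add_distrib]
      _ = ∑ i, ((e.symm (x i * y i)).1 + (e.symm (x i * y i)).2) := by
          refine Finset.sum_congr rfl fun i _ => ?_
          rw [key]
      _ = 0 := by rw [Finset.sum_add_distrib, h1, h2', add_zero]
end

section
/- Let R be a commutative ring of characteristic 2 and let A₁, A₂, A₃, B₁, B₂, B₃, C₁, C₂, C₃, D₁, D₂, D₃ be k×k circulant matrices over R. Let Ω be the 6k×6k block matrix (CIR(A₁,A₂,A₃), CIR(B₁,B₂,B₃); CIR(C₁,C₂,C₃), CIR(D₁,D₂,D₃)), where CIR(X₁,X₂,X₃) is the block circulant matrix (X₁,X₂,X₃; X₃,X₁,X₂; X₂,X₃,X₁). Then Ω·Ωᵀ = I_{6k} if and only if: A₁A₁ᵀ+A₂A₂ᵀ+A₃A₃ᵀ+B₁B₁ᵀ+B₂B₂ᵀ+B₃B₃ᵀ = I_k, C₁C₁ᵀ+C₂C₂ᵀ+C₃C₃ᵀ+D₁D₁ᵀ+D₂D₂ᵀ+D₃D₃ᵀ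 = I_k, A₁A₃ᵀ+A₂A₁ᵀ+A₃A₂ᵀ+B₁B₃ᵀ+B₂B₁ᵀ+B₃B₂ᵀ = 0, A₁C₁ᵀ+A₂C₂ᵀ+A₃C₃ᵀ+B₁D₁ᵀ+B₂D₂ᵀ+B₃D₃ᵀ = 0, A₁C₃ᵀ+A₂C₁ᵀ+A₃C₂ᵀ+B₁D₃ᵀ+B₂D₁ᵀ+B₃D₂ᵀ = 0, A₁C₂ᵀ+A₂C₃ᵀ+A₃C₁ᵀ+B₁D₂ᵀ+B₂D₃ᵀ+B₃D₁ᵀ = 0, and C₁C₃ᵀ+C₂C₁ᵀ+C₃C₂ᵀ+D₁D₃ᵀ+D₂D₁ᵀ+D₃D₂ᵀ = 0. -/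
open Matrix

/-- The 3×3 block circulant matrix `CIR(X₁, X₂, X₃) = (X₁ X₂ X₃; X₃ X₁ X₂; X₂ X₃ X₁)`
built from `k×k` blocks. -/
def blockCir3 {R : Type*} [CommRing R] {k : ℕ} (X : Fin 3 → Matrix (Fin k) (Fin k) R) :
    Matrix (Fin 3 × Fin k) (Fin 3 × Fin k) R :=
  Matrix.of fun p q => X (q.1 - p.1) p.2 q.2

section Aux
variable {R : Type*} [CommRing R] {k : ℕ}

lemma blockCir3_mul_transpose (X Y : Fin 3 → Matrix (Fin k) (Fin k) R) :
    blockCir3 X * (blockCir3 Y)ᵀ =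
      blockCir3 (fun d => ∑ m : Fin 3, X m * (Y (m - d))ᵀ) := by
  ext p q
  simp only [blockCir3, mul_apply, transpose_apply, of_apply, Matrix.sum_apply,
    Fintype.sum_prod_type]
  refine Fintype.sum_equiv (Equiv.subRight p.1)
    (fun m => ∑ j, X (m - p.1) p.2 j * Y (m - q.1) q.2 j)
    (fun m => ∑ j, X m p.2 j * Y (m - (q.1 - p.1)) q.2 j)
    (fun m => Finset.sum_congr rfl fun j _ => ?_)
  simp only [Equiv.subRight_apply]
  congr 2
  abel

lemma blockCir3_add (X Y : Fin 3 → Matrix (Fin k) (Fin k) R) :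
    blockCir3 X + blockCir3 Y = blockCir3 (X + Y) := by
  ext p q; simp [blockCir3]

lemma blockCir3_inj {X Y : Fin 3 → Matrix (Fin k) (Fin k) R} :
    blockCir3 X = blockCir3 Y ↔ ∀ d, X d = Y d := by
  constructor
  · intro h d
    ext i j
    have := congrFun (congrFun h (0, i)) (d, j)
    simpa [blockCir3] using this
  · intro h; ext p q; simp [blockCir3, h]

lemma blockCir3_one :
    blockCir3 (fun d : Fin 3 => if d = 0 then (1 : Matrix (Fin k) (Fin k) R) else 0) = 1 := by
  ext p q
  simp only [blockCir3, of_apply, Matrix.one_apply, Prod.ext_iff]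
  rcases eq_or_ne q.1 p.1 with h | h
  · simp [h, sub_self, Matrix.one_apply]
  · rw [if_neg (by simpa [sub_eq_zero] using h)]
    simp [Ne.symm h]

lemma blockCir3_zero : blockCir3 (fun _ : Fin 3 => (0 : Matrix (Fin k) (Fin k) R)) = 0 := by
  ext p q; simp [blockCir3]

lemma sum_shift0 (X Y : Fin 3 → Matrix (Fin k) (Fin k) R) :
    (∑ m : Fin 3, X m * (Y (m - 0))ᵀ) = X 0 * (Y 0)ᵀ + X 1 * (Y 1)ᵀ + X 2 * (Y 2)ᵀ := by
  rw [Fin.sum_univ_three]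
  norm_num

lemma sum_shift1 (X Y : Fin 3 → Matrix (Fin k) (Fin k) R) :
    (∑ m : Fin 3, X m * (Y (m - 1))ᵀ) = X 0 * (Y 2)ᵀ + X 1 * (Y 0)ᵀ + X 2 * (Y 1)ᵀ := by
  rw [Fin.sum_univ_three, show (0 : Fin 3) - 1 = 2 by decide, show (1 : Fin 3) - 1 = 0 by decide,
    show (2 : Fin 3) - 1 = 1 by decide]

lemma sum_shift2 (X Y : Fin 3 → Matrix (Fin k) (Fin k) R) :
    (∑ m : Fin 3, X m * (Y (m - 2))ᵀ) = X 0 * (Y 1)ᵀ + X 1 * (Y 2)ᵀ + X 2 * (Y 0)ᵀ := by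
  rw [Fin.sum_univ_three, show (0 : Fin 3) - 2 = 1 by decide, show (1 : Fin 3) - 2 = 2 by decide,
    show (2 : Fin 3) - 2 = 0 by decide]

lemma ite_one_eq_zero {M : Type*} (x y : M) : (if (1 : Fin 3) = 0 then x else y) = y :=
  if_neg (by decide)
lemma ite_two_eq_zero {M : Type*} (x y : M) : (if (2 : Fin 3) = 0 then x else y) = y :=
  if_neg (by decide)
lemma ite_zero_eq_zero {M : Type*} (x y : M) : (if (0 : Fin 3) = 0 then x else y) = x :=
  if_pos rfl

lemma forall_fin3 {P : Fin 3 → Prop} : (∀ d, P d) ↔ P 0 ∧ P 1 ∧ P 2 := by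
  constructor
  · exact fun h => ⟨h 0, h 1, h 2⟩
  · rintro ⟨h0, h1, h2⟩ d; fin_cases d <;> assumption

end Aux

/-- Theorem 3.3 (length 84 construction): for `k×k` circulant matrices `Aᵢ, Bᵢ, Cᵢ, Dᵢ`
(`i = 1, 2, 3`) over a commutative ring of characteristic 2, the block matrix
`Ω = (CIR(A₁,A₂,A₃), CIR(B₁,B₂,B₃); CIR(C₁,C₂,C₃), CIR(D₁,D₂,D₃))` satisfies `Ω Ωᵀ = I`
iff the seven stated conditions hold. -/
theorem omega_blockCir3_selfdual_iff {R : Type*} [CommRing R] [CharP R 2] {k : ℕ}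
    (A₁ A₂ A₃ B₁ B₂ B₃ C₁ C₂ C₃ D₁ D₂ D₃ : Matrix (Fin k) (Fin k) R)
    (hA₁ : ∃ a, A₁ = cir a) (hA₂ : ∃ a, A₂ = cir a) (hA₃ : ∃ a, A₃ = cir a)
    (hB₁ : ∃ b, B₁ = cir b) (hB₂ : ∃ b, B₂ = cir b) (hB₃ : ∃ b, B₃ = cir b)
    (hC₁ : ∃ c, C₁ = cir c) (hC₂ : ∃ c, C₂ = cir c) (hC₃ : ∃ c, C₃ = cir c)
    (hD₁ : ∃ d, D₁ = cir d) (hD₂ : ∃ d, D₂ = cir d) (hD₃ : ∃ d, D₃ = cir d) :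
    (Matrix.fromBlocks (blockCir3 ![A₁, A₂, A₃]) (blockCir3 ![B₁, B₂, B₃])
        (blockCir3 ![C₁, C₂, C₃]) (blockCir3 ![D₁, D₂, D₃])) *
      (Matrix.fromBlocks (blockCir3 ![A₁, A₂, A₃]) (blockCir3 ![B₁, B₂, B₃])
        (blockCir3 ![C₁, C₂, C₃]) (blockCir3 ![D₁, D₂, D₃]))ᵀ = 1 ↔
    (A₁ * A₁ᵀ + A₂ * A₂ᵀ + A₃ * A₃ᵀ + B₁ * B₁ᵀ + B₂ * B₂ᵀ + B₃ * B₃ᵀ = 1 ∧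
     C₁ * C₁ᵀ + C₂ * C₂ᵀ + C₃ * C₃ᵀ + D₁ * D₁ᵀ + D₂ * D₂ᵀ + D₃ * D₃ᵀ = 1 ∧
     A₁ * A₃ᵀ + A₂ * A₁ᵀ + A₃ * A₂ᵀ + B₁ * B₃ᵀ + B₂ * B₁ᵀ + B₃ * B₂ᵀ = 0 ∧
     A₁ * C₁ᵀ + A₂ * C₂ᵀ + A₃ * C₃ᵀ + B₁ * D₁ᵀ + B₂ * D₂ᵀ + B₃ * D₃ᵀ = 0 ∧
     A₁ * C₃ᵀ + A₂ * C₁ᵀ + A₃ * C₂ᵀ + B₁ * D₃ᵀ + B₂ * D₁ᵀ + B₃ * D₂ᵀ = 0 ∧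
     A₁ * C₂ᵀ + A₂ * C₃ᵀ + A₃ * C₁ᵀ + B₁ * D₂ᵀ + B₂ * D₃ᵀ + B₃ * D₁ᵀ = 0 ∧
     C₁ * C₃ᵀ + C₂ * C₁ᵀ + C₃ * C₂ᵀ + D₁ * D₃ᵀ + D₂ * D₁ᵀ + D₃ * D₂ᵀ = 0) := by

  rw [fromBlocks_transpose, fromBlocks_multiply, ← fromBlocks_one, fromBlocks_inj]
  simp only [blockCir3_mul_transpose, blockCir3_add, ← blockCir3_one, ← blockCir3_zero,
    blockCir3_inj, forall_fin3, Pi.add_apply, sum_shift0, sum_shift1, sum_shift2,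
    ite_zero_eq_zero, ite_one_eq_zero, ite_two_eq_zero]
  norm_num [Matrix.cons_val_zero, Matrix.cons_val_one, Matrix.head_cons]
  simp only [add_assoc]
  constructor
  · rintro ⟨⟨h1, h3, -⟩, ⟨h4, h5, h6⟩, -, h2, h7, -⟩
    exact ⟨h1, h2, h3, h4, h5, h6, h7⟩
  · rintro ⟨h1, h2, h3, h4, h5, h6, h7⟩
    refine ⟨⟨h1, h3, ?_⟩, ⟨h4, h5, h6⟩, ⟨?_, ?_, ?_⟩, h2, h7, ?_⟩ <;>
      [skip; (have h := congrArg Matrix.transpose h4); (have h := congrArg Matrix.transpose h6);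
       (have h := congrArg Matrix.transpose h5); skip]
    · have h := congrArg Matrix.transpose h3
      simp only [transpose_add, transpose_mul, transpose_transpose, transpose_zero] at h
      abel_nf at h ⊢
      convert h using 1; abel
    · simp only [transpose_add, transpose_mul, transpose_transpose, transpose_zero] at h
      abel_nf at h ⊢
      convert h using 1; abel
    · simp only [transpose_add, transpose_mul, transpose_transpose, transpose_zero] at h
      abel_nf at h ⊢
      convert h using 1; abel
    · simp only [transpose_add, transpose_mul, transpose_transpose, transpose_zero] at h
      abel_nf at h ⊢
      convert h using 1; abel
    · have h := congrArg Matrix.transpose h7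
      simp only [transpose_add, transpose_mul, transpose_transpose, transpose_zero] at h
      abel_nf at h ⊢
      convert h using 1; abel
end
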